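/- Let γ ∈ (0,1). Let f : [0,∞) × ℝ → ℝ be measurable and locally bounded, and assume that for every T, M > 0 there is L > 0 such that |f(t,x) − f(t,y)| ≤ L|x − y| for a.e. t ∈ [0,T] and all x, y ∈ [−M,M]. Then for every T > 0 and M > 0 there exists a constant C = C(M,T) > 0 such that: whenever u₁, u₂ are continuous on [0,T] with sup_{[0,T]}|uᵢ| ≤ M and uᵢ(t) = uᵢ(0) + (1/Γ(γ)) ∫₀ᵗ (t−s)^(γ−1) f(s, uᵢ(s)) ds for all t ∈ [0,T] (i = 1,2), one has sup_{t∈[0,T]} |u₁(t) − u₂(t)| ≤ C |u₁(0) − u₂(0)|. -/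

import Mathlib

open MeasureTheory Set Filter

private lemma ker_intable {γ : ℝ} (hγ : 0 < γ) (t a b : ℝ) :
    IntervalIntegrable (fun s => (t - s) ^ (γ - 1)) volume a b := by
  have h := (intervalIntegral.intervalIntegrable_rpow' (a := t - a) (b := t - b)
    (r := γ - 1) (by linarith)).comp_sub_left t
  simpa using h

private lemma ker_integral {γ : ℝ} (hγ : 0 < γ) {a t : ℝ} (_ha : a ≤ t) :
    (∫ s in a..t, (t - s) ^ (γ - 1)) = (t - a) ^ γ / γ := by
  rw [intervalIntegral.integral_comp_sub_left (fun x => x ^ (γ - 1)) t]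
  simp only [sub_self]
  rw [integral_rpow (Or.inl (by linarith))]
  rw [sub_add_cancel, Real.zero_rpow hγ.ne']
  ring

private lemma ker_mul_intable {γ : ℝ} (hγ : 0 < γ) {t a b B : ℝ}
    {g : ℝ → ℝ}
    (hg : AEStronglyMeasurable g (volume.restrict (Set.uIoc a b)))
    (hbd : ∀ s ∈ Set.uIoc a b, |g s| ≤ B) :
    IntervalIntegrable (fun s => (t - s) ^ (γ - 1) * g s) volume a b := by
  have hker : IntervalIntegrable (fun s => B * |(t - s) ^ (γ - 1)|) volume a b :=
    ((ker_intable hγ t a b).abs).const_mul B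
  apply hker.mono_fun
  · exact (Measurable.aestronglyMeasurable (by fun_prop)).mul hg
  · refine ae_restrict_of_forall_mem measurableSet_uIoc fun s hs => ?_
    have h1 := hbd s hs
    have hB : (0:ℝ) ≤ B := le_trans (abs_nonneg _) h1
    simp only [Real.norm_eq_abs, abs_mul, abs_abs]
    calc |(t - s) ^ (γ - 1)| * |g s| ≤ |(t - s) ^ (γ - 1)| * B := by
          exact mul_le_mul_of_nonneg_left h1 (abs_nonneg _)
      _ ≤ |B| * |(t - s) ^ (γ - 1)| := by
          rw [mul_comm]; exact mul_le_mul_of_nonneg_right (le_abs_self B) (abs_nonneg _)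

private def stabC (A : ℝ) : ℕ → ℝ
  | 0 => 1
  | n + 1 => 2 + A * stabC A n

private lemma stabC_one_le {A : ℝ} (hA : 0 ≤ A) : ∀ n, 1 ≤ stabC A n
  | 0 => le_refl 1
  | n + 1 => by
      have h1 := stabC_one_le hA n
      have h2 : 0 ≤ A * stabC A n := mul_nonneg hA (by linarith)
      simp only [stabC]; linarith

/-- Stability of solutions in the initial value: for every `T, M > 0`
there is `C = C(M,T) > 0` such that any two solutions bounded by `M` on `[0,T]` satisfy
`sup_{[0,T]} |u₁ − u₂| ≤ C |u₁(0) − u₂(0)|`. -/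
theorem fractional_ode_stability_in_initial_value
    (γ : ℝ) (hγ : γ ∈ Set.Ioo (0:ℝ) 1)
    (f : ℝ → ℝ → ℝ)
    (hf_meas : Measurable (Function.uncurry f))
    (hf_bdd : ∀ T > (0:ℝ), ∀ M > (0:ℝ), ∃ C : ℝ,
      ∀ t ∈ Set.Icc 0 T, ∀ x ∈ Set.Icc (-M) M, |f t x| ≤ C)
    (hf_lip : ∀ T > (0:ℝ), ∀ M > (0:ℝ), ∃ L > (0:ℝ),
      ∀ᵐ t ∂volume.restrict (Set.Icc (0:ℝ) T),
        ∀ x ∈ Set.Icc (-M) M, ∀ y ∈ Set.Icc (-M) M, |f t x - f t y| ≤ L * |x - y|) :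
    ∀ T > (0:ℝ), ∀ M > (0:ℝ), ∃ C > (0:ℝ),
      ∀ u₁ u₂ : ℝ → ℝ,
        ContinuousOn u₁ (Set.Icc 0 T) → ContinuousOn u₂ (Set.Icc 0 T) →
        (∀ t ∈ Set.Icc 0 T, |u₁ t| ≤ M) → (∀ t ∈ Set.Icc 0 T, |u₂ t| ≤ M) →
        (∀ t ∈ Set.Icc 0 T,
          u₁ t = u₁ 0 + (1 / Real.Gamma γ) *
            ∫ s in (0:ℝ)..t, (t - s) ^ (γ - 1) * f s (u₁ s)) →
        (∀ t ∈ Set.Icc 0 T,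
          u₂ t = u₂ 0 + (1 / Real.Gamma γ) *
            ∫ s in (0:ℝ)..t, (t - s) ^ (γ - 1) * f s (u₂ s)) →
        ∀ t ∈ Set.Icc 0 T, |u₁ t - u₂ t| ≤ C * |u₁ 0 - u₂ 0| := by
  obtain ⟨hγ0, hγ1⟩ := hγ
  intro T hT M hM
  obtain ⟨L, hL0, hLip⟩ := hf_lip T hT M hM
  obtain ⟨Cf, hCf⟩ := hf_bdd T hT M hM
  have hΓ : 0 < Real.Gamma γ := Real.Gamma_pos_of_pos hγ0
  set K : ℝ := L / Real.Gamma γ with hKdef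
  have hK : 0 < K := div_pos hL0 hΓ
  set h : ℝ := min T ((γ / (2 * K)) ^ (γ⁻¹)) with hhdef
  have hh : 0 < h := lt_min hT (Real.rpow_pos_of_pos (by positivity) _)
  have hKh : K * (h ^ γ / γ) ≤ 1 / 2 := by
    have h1 : h ≤ (γ / (2 * K)) ^ (γ⁻¹) := min_le_right _ _
    have h2 : h ^ γ ≤ ((γ / (2 * K)) ^ (γ⁻¹)) ^ γ :=
      Real.rpow_le_rpow hh.le h1 hγ0.le
    have h3 : ((γ / (2 * K)) ^ (γ⁻¹)) ^ γ = γ / (2 * K) :=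
      Real.rpow_inv_rpow (by positivity) hγ0.ne'
    rw [h3] at h2
    have h4 : K * (h ^ γ / γ) ≤ K * ((γ / (2 * K)) / γ) := by
      apply mul_le_mul_of_nonneg_left _ hK.le
      exact div_le_div_of_nonneg_right h2 hγ0.le
    have h5 : K * ((γ / (2 * K)) / γ) = 1 / 2 := by field_simp
    linarith
  obtain ⟨N, hN⟩ := exists_nat_ge (T / h)
  have hTN : T ≤ (N : ℝ) * h := by
    rw [div_le_iff₀ hh] at hN; exact hN
  set A : ℝ := 2 * K * h ^ (γ - 1) * T with hAdef
  have hhp : 0 < h ^ (γ - 1) := Real.rpow_pos_of_pos hh _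
  have hA : 0 ≤ A := by positivity
  refine ⟨stabC A N, by linarith [stabC_one_le hA N], ?_⟩
  intro u₁ u₂ hu₁c hu₂c hb₁ hb₂ heq₁ heq₂
  set δ : ℝ := |u₁ 0 - u₂ 0| with hδdef
  have hδ0 : 0 ≤ δ := abs_nonneg _
  have hwc : ContinuousOn (fun s => |u₁ s - u₂ s|) (Icc 0 T) := (hu₁c.sub hu₂c).abs
  have hwm : AEMeasurable (fun s => |u₁ s - u₂ s|) (volume.restrict (Icc 0 T)) :=
    hwc.aemeasurable measurableSet_Icc
  have hf₁m : AEMeasurable (fun s => f s (u₁ s)) (volume.restrict (Icc 0 T)) :=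
    hf_meas.comp_aemeasurable (aemeasurable_id.prodMk (hu₁c.aemeasurable measurableSet_Icc))
  have hf₂m : AEMeasurable (fun s => f s (u₂ s)) (volume.restrict (Icc 0 T)) :=
    hf_meas.comp_aemeasurable (aemeasurable_id.prodMk (hu₂c.aemeasurable measurableSet_Icc))
  -- generic integrability of kernel times bounded measurable function
  have hintg : ∀ (g : ℝ → ℝ) (B : ℝ), AEMeasurable g (volume.restrict (Icc 0 T)) →
      (∀ s ∈ Icc 0 T, |g s| ≤ B) →
      ∀ {t' a b : ℝ}, a ≤ b → 0 ≤ a → b ≤ T →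
      IntervalIntegrable (fun s => (t' - s) ^ (γ - 1) * g s) volume a b := by
    intro g B hg hbd t' a b hab ha hb
    have hss : Set.uIoc a b ⊆ Icc 0 T := by
      rw [Set.uIoc_of_le hab]
      exact fun s hs => ⟨ha.trans hs.1.le, hs.2.trans hb⟩
    refine ker_mul_intable hγ0 ?_ (B := B) ?_
    · exact (hg.mono_measure (Measure.restrict_mono hss le_rfl)).aestronglyMeasurable
    · intro s hs; exact hbd s (hss hs)
  have hbw : ∀ s ∈ Icc 0 T, |(|u₁ s - u₂ s|)| ≤ 2 * M := by
    intro s hs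
    rw [abs_abs]
    calc |u₁ s - u₂ s| ≤ |u₁ s| + |u₂ s| := abs_sub _ _
      _ ≤ 2 * M := by linarith [hb₁ s hs, hb₂ s hs]
  have hbf₁ : ∀ s ∈ Icc 0 T, |f s (u₁ s)| ≤ Cf := fun s hs =>
    hCf s hs _ (Set.mem_Icc.mpr (abs_le.mp (hb₁ s hs)))
  have hbf₂ : ∀ s ∈ Icc 0 T, |f s (u₂ s)| ≤ Cf := fun s hs =>
    hCf s hs _ (Set.mem_Icc.mpr (abs_le.mp (hb₂ s hs)))
  -- core integral inequality
  have hcore : ∀ t ∈ Icc 0 T, |u₁ t - u₂ t| ≤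
      δ + K * ∫ s in (0:ℝ)..t, (t - s) ^ (γ - 1) * |u₁ s - u₂ s| := by
    intro t ht
    obtain ⟨ht0, htT⟩ := ht
    have hi1 : IntervalIntegrable (fun s => (t - s) ^ (γ - 1) * f s (u₁ s)) volume 0 t :=
      hintg _ Cf hf₁m hbf₁ ht0 le_rfl htT
    have hi2 : IntervalIntegrable (fun s => (t - s) ^ (γ - 1) * f s (u₂ s)) volume 0 t :=
      hintg _ Cf hf₂m hbf₂ ht0 le_rfl htT
    have hiw : IntervalIntegrable (fun s => (t - s) ^ (γ - 1) * |u₁ s - u₂ s|) volume 0 t :=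
      hintg _ (2 * M) hwm hbw ht0 le_rfl htT
    have key : u₁ t - u₂ t = (u₁ 0 - u₂ 0) + (1 / Real.Gamma γ) *
        ∫ s in (0:ℝ)..t, (t - s) ^ (γ - 1) * (f s (u₁ s) - f s (u₂ s)) := by
      rw [heq₁ t ⟨ht0, htT⟩, heq₂ t ⟨ht0, htT⟩]
      have e : (fun s => (t - s) ^ (γ - 1) * (f s (u₁ s) - f s (u₂ s)))
          = fun s => (t - s) ^ (γ - 1) * f s (u₁ s) - (t - s) ^ (γ - 1) * f s (u₂ s) := by
        funext s; ring
      rw [e, intervalIntegral.integral_sub hi1 hi2]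
      ring
    have hptwise : ∀ᵐ s ∂volume.restrict (Set.uIoc (0:ℝ) t),
        ‖(t - s) ^ (γ - 1) * (f s (u₁ s) - f s (u₂ s))‖
          ≤ L * ((t - s) ^ (γ - 1) * |u₁ s - u₂ s|) := by
      have hLip' : ∀ᵐ s ∂volume.restrict (Set.uIoc 0 t),
          ∀ x ∈ Set.Icc (-M) M, ∀ y ∈ Set.Icc (-M) M, |f s x - f s y| ≤ L * |x - y| := by
        apply hLip.filter_mono
        apply ae_mono
        apply Measure.restrict_mono _ le_rfl
        rw [Set.uIoc_of_le ht0]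
        exact fun s hs => ⟨hs.1.le, hs.2.trans htT⟩
      filter_upwards [hLip', self_mem_ae_restrict measurableSet_uIoc] with s hLs hsmem
      rw [Set.uIoc_of_le ht0] at hsmem
      have hsT : s ∈ Icc 0 T := ⟨hsmem.1.le, hsmem.2.trans htT⟩
      have hker0 : (0:ℝ) ≤ (t - s) ^ (γ - 1) :=
        Real.rpow_nonneg (by linarith [hsmem.2]) _
      have hLipval := hLs (u₁ s) (Set.mem_Icc.mpr (abs_le.mp (hb₁ s hsT)))
        (u₂ s) (Set.mem_Icc.mpr (abs_le.mp (hb₂ s hsT)))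
      rw [Real.norm_eq_abs, abs_mul, abs_of_nonneg hker0]
      calc (t - s) ^ (γ - 1) * |f s (u₁ s) - f s (u₂ s)|
          ≤ (t - s) ^ (γ - 1) * (L * |u₁ s - u₂ s|) :=
            mul_le_mul_of_nonneg_left hLipval hker0
        _ = L * ((t - s) ^ (γ - 1) * |u₁ s - u₂ s|) := by ring
    have hbnd : |∫ s in (0:ℝ)..t, (t - s) ^ (γ - 1) * (f s (u₁ s) - f s (u₂ s))|
        ≤ |∫ s in (0:ℝ)..t, L * ((t - s) ^ (γ - 1) * |u₁ s - u₂ s|)| := by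
      have H := intervalIntegral.norm_integral_le_abs_of_norm_le hptwise (hiw.const_mul L)
      simpa [Real.norm_eq_abs] using H
    have hnn : 0 ≤ ∫ s in (0:ℝ)..t, L * ((t - s) ^ (γ - 1) * |u₁ s - u₂ s|) := by
      apply intervalIntegral.integral_nonneg ht0
      intro s hs
      have : (0:ℝ) ≤ (t - s) ^ (γ - 1) := Real.rpow_nonneg (by linarith [hs.2]) _
      positivity
    rw [abs_of_nonneg hnn, intervalIntegral.integral_const_mul] at hbnd
    calc |u₁ t - u₂ t|
        ≤ δ + |(1 / Real.Gamma γ) *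
            ∫ s in (0:ℝ)..t, (t - s) ^ (γ - 1) * (f s (u₁ s) - f s (u₂ s))| := by
          rw [key]; exact abs_add_le _ _
      _ = δ + (1 / Real.Gamma γ) *
            |∫ s in (0:ℝ)..t, (t - s) ^ (γ - 1) * (f s (u₁ s) - f s (u₂ s))| := by
          rw [abs_mul, abs_of_nonneg (by positivity : (0:ℝ) ≤ 1 / Real.Gamma γ)]
      _ ≤ δ + (1 / Real.Gamma γ) *
            (L * ∫ s in (0:ℝ)..t, (t - s) ^ (γ - 1) * |u₁ s - u₂ s|) := by
          have := mul_le_mul_of_nonneg_left hbnd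
            (by positivity : (0:ℝ) ≤ 1 / Real.Gamma γ)
          linarith
      _ = δ + K * ∫ s in (0:ℝ)..t, (t - s) ^ (γ - 1) * |u₁ s - u₂ s| := by
          rw [hKdef]; ring
  -- main induction
  have main : ∀ n : ℕ, ∀ t ∈ Icc 0 T, t ≤ (n : ℝ) * h →
      |u₁ t - u₂ t| ≤ stabC A n * δ := by
    intro n
    induction n with
    | zero =>
      intro t ht ht0
      have htz : t = 0 := le_antisymm (by simpa using ht0) ht.1
      subst htz
      rw [show stabC A 0 = 1 from rfl, one_mul]
    | succ n ih =>
      intro t ht htn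
      push_cast at htn
      set b : ℝ := min (((n : ℝ) + 1) * h) T with hbdef
      have hb0 : 0 ≤ b := le_min (by positivity) hT.le
      have hbT : b ≤ T := min_le_right _ _
      have hwcb : ContinuousOn (fun s => |u₁ s - u₂ s|) (Icc 0 b) :=
        hwc.mono (Icc_subset_Icc le_rfl hbT)
      obtain ⟨c, hcmem, hcmax⟩ := isCompact_Icc.exists_isMaxOn
        (Set.nonempty_Icc.mpr hb0) hwcb
      obtain ⟨hc0, hcb⟩ := hcmem
      have hcT : c ≤ T := hcb.trans hbT
      have hcnh : c ≤ ((n : ℝ) + 1) * h := hcb.trans (min_le_left _ _)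
      have htb : t ∈ Icc 0 b := ⟨ht.1, le_min htn ht.2⟩
      have hwt : |u₁ t - u₂ t| ≤ |u₁ c - u₂ c| := hcmax htb
      have hwcnn : (0:ℝ) ≤ |u₁ c - u₂ c| := abs_nonneg _
      have hCc := hcore c ⟨hc0, hcT⟩
      set a : ℝ := max (c - h) 0 with hadef
      have ha0 : 0 ≤ a := le_max_right _ _
      have hac : a ≤ c := max_le (by linarith) hc0
      have haT : a ≤ T := hac.trans hcT
      have hch : c - a ≤ h := by
        have := le_max_left (c - h) 0
        linarith
      have hanh : a ≤ (n : ℝ) * h := by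
        apply max_le
        · linarith
        · positivity
      have hIw1 : IntervalIntegrable
          (fun s => (c - s) ^ (γ - 1) * |u₁ s - u₂ s|) volume 0 a :=
        hintg _ (2 * M) hwm hbw ha0 le_rfl haT
      have hIw2 : IntervalIntegrable
          (fun s => (c - s) ^ (γ - 1) * |u₁ s - u₂ s|) volume a c :=
        hintg _ (2 * M) hwm hbw hac ha0 hcT
      have hsplit : (∫ s in (0:ℝ)..c, (c - s) ^ (γ - 1) * |u₁ s - u₂ s|)
          = (∫ s in (0:ℝ)..a, (c - s) ^ (γ - 1) * |u₁ s - u₂ s|)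
            + ∫ s in a..c, (c - s) ^ (γ - 1) * |u₁ s - u₂ s| :=
        (intervalIntegral.integral_add_adjacent_intervals hIw1 hIw2).symm
      have hXnn : (0:ℝ) ≤ h ^ (γ - 1) * (stabC A n * δ) := by
        have := stabC_one_le hA n
        have h1 : 0 ≤ stabC A n * δ := mul_nonneg (by linarith) hδ0
        positivity
      have hhead : (∫ s in (0:ℝ)..a, (c - s) ^ (γ - 1) * |u₁ s - u₂ s|)
          ≤ a * (h ^ (γ - 1) * (stabC A n * δ)) := by
        rcases le_or_gt (c - h) 0 with hch0 | hch0
        · have ha' : a = 0 := max_eq_right hch0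
          rw [ha', intervalIntegral.integral_same]
          simp
        · have ha' : a = c - h := max_eq_left hch0.le
          have hpt : ∀ s ∈ Icc (0:ℝ) a,
              (c - s) ^ (γ - 1) * |u₁ s - u₂ s| ≤ h ^ (γ - 1) * (stabC A n * δ) := by
            intro s hs
            have hsa := hs.2
            have hhs : h ≤ c - s := by rw [ha'] at hsa; linarith
            have hker : (c - s) ^ (γ - 1) ≤ h ^ (γ - 1) :=
              Real.rpow_le_rpow_of_nonpos hh hhs (by linarith)
            have hsT : s ∈ Icc 0 T := ⟨hs.1, by linarith [haT]⟩
            have hwih : |u₁ s - u₂ s| ≤ stabC A n * δ :=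
              ih s hsT (by linarith [hanh])
            exact mul_le_mul hker hwih (abs_nonneg _) hhp.le
          calc (∫ s in (0:ℝ)..a, (c - s) ^ (γ - 1) * |u₁ s - u₂ s|)
              ≤ ∫ _s in (0:ℝ)..a, h ^ (γ - 1) * (stabC A n * δ) :=
                intervalIntegral.integral_mono_on ha0 hIw1 intervalIntegrable_const hpt
            _ = a * (h ^ (γ - 1) * (stabC A n * δ)) := by
                rw [intervalIntegral.integral_const]; simp [smul_eq_mul]
      have htail : (∫ s in a..c, (c - s) ^ (γ - 1) * |u₁ s - u₂ s|)
          ≤ h ^ γ / γ * |u₁ c - u₂ c| := by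
        have h1 : (∫ s in a..c, (c - s) ^ (γ - 1) * |u₁ s - u₂ s|)
            ≤ ∫ s in a..c, (c - s) ^ (γ - 1) * |u₁ c - u₂ c| := by
          apply intervalIntegral.integral_mono_on hac hIw2
            ((ker_intable hγ0 c a c).mul_const _)
          intro s hs
          have hker0 : (0:ℝ) ≤ (c - s) ^ (γ - 1) :=
            Real.rpow_nonneg (by linarith [hs.2]) _
          have hsb : s ∈ Icc 0 b := ⟨ha0.trans hs.1, hs.2.trans hcb⟩
          exact mul_le_mul_of_nonneg_left (hcmax hsb) hker0
        have h2 : (∫ s in a..c, (c - s) ^ (γ - 1) * |u₁ c - u₂ c|)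
            = ((c - a) ^ γ / γ) * |u₁ c - u₂ c| := by
          rw [intervalIntegral.integral_mul_const, ker_integral hγ0 hac]
        have h3 : (c - a) ^ γ ≤ h ^ γ :=
          Real.rpow_le_rpow (by linarith) hch hγ0.le
        have h4 : ((c - a) ^ γ / γ) * |u₁ c - u₂ c| ≤ (h ^ γ / γ) * |u₁ c - u₂ c| := by
          apply mul_le_mul_of_nonneg_right _ hwcnn
          exact div_le_div_of_nonneg_right h3 hγ0.le
        linarith
      -- combine
      have hKH : K * (∫ s in (0:ℝ)..a, (c - s) ^ (γ - 1) * |u₁ s - u₂ s|)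
          ≤ K * (T * (h ^ (γ - 1) * (stabC A n * δ))) := by
        apply mul_le_mul_of_nonneg_left _ hK.le
        exact hhead.trans (mul_le_mul_of_nonneg_right haT hXnn)
      have hKT : K * (∫ s in a..c, (c - s) ^ (γ - 1) * |u₁ s - u₂ s|)
          ≤ (1 / 2) * |u₁ c - u₂ c| := by
        calc K * (∫ s in a..c, (c - s) ^ (γ - 1) * |u₁ s - u₂ s|)
            ≤ K * (h ^ γ / γ * |u₁ c - u₂ c|) :=
              mul_le_mul_of_nonneg_left htail hK.le
          _ = (K * (h ^ γ / γ)) * |u₁ c - u₂ c| := by ring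
          _ ≤ (1 / 2) * |u₁ c - u₂ c| :=
              mul_le_mul_of_nonneg_right hKh hwcnn
      have hAX : K * (T * (h ^ (γ - 1) * (stabC A n * δ))) = A * stabC A n * δ / 2 := by
        rw [hAdef]; ring
      have hfinal : |u₁ c - u₂ c| ≤ stabC A (n + 1) * δ := by
        have hexp : stabC A (n + 1) * δ = 2 * δ + A * stabC A n * δ := by
          rw [show stabC A (n + 1) = 2 + A * stabC A n from rfl]; ring
        rw [hexp]
        rw [hsplit, mul_add] at hCc
        linarith
      exact hwt.trans hfinal
  intro t ht
  exact main N t ht (ht.2.trans hTN)
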